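/- arXiv:1709.00750 — 3 statements merged into one kernel-verified Lean document; each statement's English description precedes it below -/
import Mathlib

section
/- For n ≥ 1 and k ≥ 1, the function f_{n,k}(z₁,...,zₙ) = (-1)ⁿ ∑_{σ∈Sₙ} ∏_{j=1}^{n} g(z_{σ(1)}^{-1}⋯z_{σ(j-1)}^{-1} z_{σ(j)}^k) / ∏_{j=1}^{n} g(z_{σ(1)}^{-1}⋯z_{σ(j)}^{-1}) satisfies the quasi-periodicity f_{n,k}(qz₁,z₂,...,zₙ) = (-1)^{k-1} q^{-(k+1)(k-2)/2} z₁^{-k²+1} z₂^{k+1}⋯zₙ^{k+1} f_{n,k}(z₁,...,zₙ). -/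
open Finset

/-- Theta function `g(z) = ∑_{i∈ℤ} (-1)^i z^i q^{i(i-1)/2}`. -/
noncomputable def theta (q z : ℂ) : ℂ := ∑' i : ℤ, (-1) ^ i * z ^ i * q ^ (i * (i - 1) / 2)

/-- `f_{n,k}(z₁,…,zₙ) = (-1)ⁿ ∑_{σ∈Sₙ} ∏_{j=1}^n g(z_{σ(1)}^{-1}⋯z_{σ(j-1)}^{-1} z_{σ(j)}^k)
/ ∏_{j=1}^n g(z_{σ(1)}^{-1}⋯z_{σ(j)}^{-1})`. -/
noncomputable def fnk (q : ℂ) (n k : ℕ) (z : Fin n → ℂ) : ℂ :=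
  (-1 : ℂ) ^ n * ∑ σ : Equiv.Perm (Fin n),
    (∏ j : Fin n,
        theta q ((∏ l ∈ univ.filter (fun l => l < j), (z (σ l))⁻¹) * z (σ j) ^ (k : ℤ))) /
    (∏ j : Fin n,
        theta q (∏ l ∈ univ.filter (fun l => l ≤ j), (z (σ l))⁻¹))

/-- All the `g`-denominators occurring in `f_{n,k}` are nonzero at `z`
(i.e. `z` is away from the poles of `f_{n,k}`). -/
def DenOK (q : ℂ) (n : ℕ) (z : Fin n → ℂ) : Prop :=
  ∀ σ : Equiv.Perm (Fin n), ∀ j : Fin n,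
    theta q (∏ l ∈ univ.filter (fun l => l ≤ j), (z (σ l))⁻¹) ≠ 0

theorem theta_q_mul (q z : ℂ) (hq0 : q ≠ 0) (hz : z ≠ 0) :
    theta q (q * z) = -z⁻¹ * theta q z := by
  unfold theta
  rw [← tsum_mul_left, ← (Equiv.subRight (1 : ℤ)).tsum_eq
    (fun i : ℤ => (-1) ^ i * (q * z) ^ i * q ^ (i * (i - 1) / 2))]
  apply tsum_congr
  intro j
  simp only [Equiv.subRight_apply]
  have h1 : (j - 1) * (j - 1 - 1) / 2 = j * (j - 1) / 2 + (-(j - 1)) := by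
    have : (j - 1) * (j - 1 - 1) = (j * (j - 1)) + (-(j-1)) * 2 := by ring
    rw [this, Int.add_mul_ediv_right _ _ (by norm_num : (2:ℤ) ≠ 0)]
  rw [h1, mul_zpow, zpow_sub_one₀ (by exact neg_ne_zero.mpr one_ne_zero : (-1:ℂ) ≠ 0),
    zpow_sub_one₀ hz, zpow_sub_one₀ hq0, zpow_add₀ hq0, zpow_neg, zpow_sub_one₀ hq0]
  have h2 : (q:ℂ)^j ≠ 0 := zpow_ne_zero _ hq0
  have h3 : (z:ℂ)^j ≠ 0 := zpow_ne_zero _ hz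
  field_simp

theorem theta_qinv_mul (q z : ℂ) (hq0 : q ≠ 0) (hz : z ≠ 0) :
    theta q (q⁻¹ * z) = -(q⁻¹ * z) * theta q z := by
  have h := theta_q_mul q (q⁻¹ * z) hq0 (by
    exact mul_ne_zero (inv_ne_zero hq0) hz)
  rw [← mul_assoc, mul_inv_cancel₀ hq0, one_mul] at h
  rw [h]
  field_simp

theorem theta_qpow_mul (q z : ℂ) (hq0 : q ≠ 0) (hz : z ≠ 0) (k : ℕ) :
    theta q (q ^ k * z) =
      (-1) ^ k * q ^ (-((k : ℤ) * ((k : ℤ) - 1) / 2)) * z ^ (-(k : ℤ)) * theta q z := by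
  induction k with
  | zero => simp
  | succ k ih =>
    have hqk : (q : ℂ) ^ k * z ≠ 0 := mul_ne_zero (pow_ne_zero _ hq0) hz
    have : q ^ (k + 1) * z = q * (q ^ k * z) := by ring
    rw [this, theta_q_mul q _ hq0 hqk, ih]
    have he : (-(((k : ℤ) + 1) * (((k : ℤ) + 1) - 1) / 2)) =
        (-((k : ℤ) * ((k : ℤ) - 1) / 2)) + (-(k : ℤ)) := by
      have h2 : ((k : ℤ) + 1) * (((k : ℤ) + 1) - 1) = (k : ℤ) * ((k : ℤ) - 1) + (k : ℤ) * 2 := by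
        ring
      rw [h2, Int.add_mul_ediv_right _ _ (by norm_num : (2:ℤ) ≠ 0)]
      ring
    push_cast
    rw [he]
    rw [mul_inv, zpow_add₀ hq0]
    have h4 : (q:ℂ)^(-((k:ℤ))) = (q ^ k)⁻¹ := by
      rw [zpow_neg, zpow_natCast]
    have h5 : (z:ℂ)^(-((k:ℤ)+1)) = z⁻¹ * z ^ (-(k:ℤ)) := by
      rw [show -((k:ℤ)+1) = (-1) + (-(k:ℤ)) by ring, zpow_add₀ hz, zpow_neg_one]
    rw [h4, h5]
    ring

lemma thetaDivHelper (a P q : ℂ) (ha : a ≠ 0) (hP : P ≠ 0) (hq : q ≠ 0) (t : ℤ) :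
    -(q⁻¹ * (P * a ^ t)) / -(q⁻¹ * (a⁻¹ * P)) = a ^ (t + 1) := by
  rw [zpow_add_one₀ ha, neg_div_neg_eq, mul_div_mul_left _ _ (inv_ne_zero hq),
    div_eq_iff (mul_ne_zero (inv_ne_zero ha) hP),
    show a ^ t * a * (a⁻¹ * P) = a ^ t * (a * a⁻¹) * P by ring, mul_inv_cancel₀ ha]
  ring

theorem fnk_quasi_periodicity (q : ℂ) (hq0 : q ≠ 0) (hq : ‖q‖ < 1) (n k : ℕ) (hk : 1 ≤ k)
    (z : Fin (n + 1) → ℂ) (hz : ∀ i, z i ≠ 0)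
    (hden : DenOK q (n + 1) z)
    (hden' : DenOK q (n + 1) (Function.update z 0 (q * z 0))) :
    fnk q (n + 1) k (Function.update z 0 (q * z 0)) =
      (-1 : ℂ) ^ (k - 1) * q ^ (-(((k : ℤ) + 1) * ((k : ℤ) - 2) / 2)) *
        z 0 ^ (-(k : ℤ) ^ 2 + 1) *
        (∏ i ∈ Finset.univ.erase (0 : Fin (n + 1)), z i ^ ((k : ℤ) + 1)) *
        fnk q (n + 1) k z := by
  classical
  set z' : Fin (n + 1) → ℂ := Function.update z 0 (q * z 0) with hz'def
  have hz'0 : z' 0 = q * z 0 := Function.update_self _ _ _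
  have hz'eq : ∀ i : Fin (n + 1), i ≠ 0 → z' i = z i := fun i h =>
    Function.update_of_ne h _ _
  have hz'ne : ∀ i, z' i ≠ 0 := by
    intro i
    by_cases h : i = 0
    · subst h; rw [hz'0]; exact mul_ne_zero hq0 (hz 0)
    · rw [hz'eq i h]; exact hz i
  set C : ℂ := (-1 : ℂ) ^ (k - 1) * q ^ (-(((k : ℤ) + 1) * ((k : ℤ) - 2) / 2)) *
        z 0 ^ (-(k : ℤ) ^ 2 + 1) *
        (∏ i ∈ Finset.univ.erase (0 : Fin (n + 1)), z i ^ ((k : ℤ) + 1)) with hCdef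
  unfold fnk
  rw [mul_left_comm]
  congr 1
  rw [Finset.mul_sum]
  apply Finset.sum_congr rfl
  intro σ _
  -- notation
  obtain ⟨m, hσm⟩ : ∃ m : Fin (n + 1), σ m = 0 := ⟨σ.symm 0, σ.apply_symm_apply 0⟩
  have hne : ∀ j : Fin (n + 1), j ≠ m → σ j ≠ 0 := by
    intro j h hc
    exact h (σ.injective (hc.trans hσm.symm))
  have hPne : ∀ j : Fin (n + 1),
      (∏ l ∈ univ.filter (fun l => l < j), (z (σ l))⁻¹) ≠ 0 := fun j =>
    Finset.prod_ne_zero_iff.mpr fun l _ => inv_ne_zero (hz _)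
  have hwne : ∀ j : Fin (n + 1),
      (∏ l ∈ univ.filter (fun l => l < j), (z (σ l))⁻¹) * z (σ j) ^ (k : ℤ) ≠ 0 := fun j =>
    mul_ne_zero (hPne j) (zpow_ne_zero _ (hz _))
  have hune : ∀ j : Fin (n + 1),
      (∏ l ∈ univ.filter (fun l => l ≤ j), (z (σ l))⁻¹) ≠ 0 := fun j =>
    Finset.prod_ne_zero_iff.mpr fun l _ => inv_ne_zero (hz _)
  -- products over z' in terms of products over z
  have hP' : ∀ j : Fin (n + 1),
      (∏ l ∈ univ.filter (fun l => l < j), (z' (σ l))⁻¹) =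
        (if m < j then q⁻¹ else 1) * (∏ l ∈ univ.filter (fun l => l < j), (z (σ l))⁻¹) := by
    intro j
    by_cases hmj : m < j
    · have hm_mem : m ∈ univ.filter (fun l => l < j) := by simp [hmj]
      rw [if_pos hmj, ← Finset.mul_prod_erase _ _ hm_mem, ← Finset.mul_prod_erase _ _ hm_mem]
      have h1 : ∀ l ∈ (univ.filter (fun l => l < j)).erase m,
          (z' (σ l))⁻¹ = (z (σ l))⁻¹ := by
        intro l hl
        rw [hz'eq _ (hne l (Finset.ne_of_mem_erase hl))]
      rw [Finset.prod_congr rfl h1, hσm, hz'0, mul_inv]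
      ring
    · rw [if_neg hmj, one_mul]
      apply Finset.prod_congr rfl
      intro l hl
      simp only [Finset.mem_filter] at hl
      have : l ≠ m := fun h => hmj (h ▸ hl.2)
      rw [hz'eq _ (hne l this)]
  have hu' : ∀ j : Fin (n + 1),
      (∏ l ∈ univ.filter (fun l => l ≤ j), (z' (σ l))⁻¹) =
        (if m ≤ j then q⁻¹ else 1) * (∏ l ∈ univ.filter (fun l => l ≤ j), (z (σ l))⁻¹) := by
    intro j
    by_cases hmj : m ≤ j
    · have hm_mem : m ∈ univ.filter (fun l => l ≤ j) := by simp [hmj]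
      rw [if_pos hmj, ← Finset.mul_prod_erase _ _ hm_mem, ← Finset.mul_prod_erase _ _ hm_mem]
      have h1 : ∀ l ∈ (univ.filter (fun l => l ≤ j)).erase m,
          (z' (σ l))⁻¹ = (z (σ l))⁻¹ := by
        intro l hl
        rw [hz'eq _ (hne l (Finset.ne_of_mem_erase hl))]
      rw [Finset.prod_congr rfl h1, hσm, hz'0, mul_inv]
      ring
    · rw [if_neg hmj, one_mul]
      apply Finset.prod_congr rfl
      intro l hl
      simp only [Finset.mem_filter] at hl
      have : l ≠ m := fun h => hmj (h ▸ hl.2)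
      rw [hz'eq _ (hne l this)]
  -- the per-factor constants
  set A : ℂ := (-1 : ℂ) ^ k * q ^ (-((k : ℤ) * ((k : ℤ) - 1) / 2)) *
      ((∏ l ∈ univ.filter (fun l => l < m), (z (σ l))⁻¹) * z (σ m) ^ (k : ℤ)) ^ (-(k : ℤ))
    with hAdef
  have hnum : (∏ j : Fin (n + 1),
        theta q ((∏ l ∈ univ.filter (fun l => l < j), (z' (σ l))⁻¹) * z' (σ j) ^ (k : ℤ))) =
      (∏ j : Fin (n + 1), (if j = m then A else 1) *
          (if m < j then
            -(q⁻¹ * ((∏ l ∈ univ.filter (fun l => l < j), (z (σ l))⁻¹) * z (σ j) ^ (k : ℤ)))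
          else 1)) *
      (∏ j : Fin (n + 1),
        theta q ((∏ l ∈ univ.filter (fun l => l < j), (z (σ l))⁻¹) * z (σ j) ^ (k : ℤ))) := by
    rw [← Finset.prod_mul_distrib]
    apply Finset.prod_congr rfl
    intro j _
    rcases lt_trichotomy j m with hlt | heq | hgt
    · rw [hP' j, if_neg (not_lt.mpr hlt.le), one_mul, hz'eq _ (hne j (ne_of_lt hlt)),
        if_neg (ne_of_lt hlt), if_neg (not_lt.mpr hlt.le), one_mul, one_mul]
    · subst heq
      rw [hP' j, if_neg (lt_irrefl j), one_mul, hσm, hz'0, mul_zpow,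
        show (q : ℂ) ^ (k : ℤ) = q ^ k from zpow_natCast q k,
        show (∏ l ∈ univ.filter (fun l => l < j), (z (σ l))⁻¹) * (q ^ k * z 0 ^ (k : ℤ)) =
          q ^ k * ((∏ l ∈ univ.filter (fun l => l < j), (z (σ l))⁻¹) * z 0 ^ (k : ℤ)) by ring,
        theta_qpow_mul q _ hq0 (mul_ne_zero (hPne j) (zpow_ne_zero _ (hz 0)))]
      rw [if_pos rfl, if_neg (lt_irrefl j), mul_one, hAdef, hσm]
    · rw [hP' j, if_pos hgt, hz'eq _ (hne j (ne_of_gt hgt)), mul_assoc,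
        theta_qinv_mul q _ hq0 (hwne j), if_neg (ne_of_gt hgt), if_pos hgt, one_mul]
  have hden2 : (∏ j : Fin (n + 1),
        theta q (∏ l ∈ univ.filter (fun l => l ≤ j), (z' (σ l))⁻¹)) =
      (∏ j : Fin (n + 1), (if m ≤ j then
          -(q⁻¹ * (∏ l ∈ univ.filter (fun l => l ≤ j), (z (σ l))⁻¹)) else 1)) *
      (∏ j : Fin (n + 1),
        theta q (∏ l ∈ univ.filter (fun l => l ≤ j), (z (σ l))⁻¹)) := by
    rw [← Finset.prod_mul_distrib]
    apply Finset.prod_congr rfl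
    intro j _
    by_cases hmj : m ≤ j
    · rw [hu' j, if_pos hmj, theta_qinv_mul q _ hq0 (hune j), if_pos hmj]
    · rw [hu' j, if_neg hmj, one_mul, if_neg hmj, one_mul]
  rw [hnum, hden2, mul_div_mul_comm]
  congr 1
  -- ratio of constant products equals C
  rw [Finset.prod_mul_distrib, Finset.prod_ite_eq' univ m (fun _ => A), if_pos (mem_univ m)]
  rw [← Finset.prod_filter, ← Finset.prod_filter]
  have hins : univ.filter (fun j : Fin (n + 1) => m ≤ j) =
      insert m (univ.filter (fun j => m < j)) := by
    ext j
    simp only [Finset.mem_filter, Finset.mem_insert, Finset.mem_univ, true_and]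
    constructor
    · intro h
      rcases eq_or_lt_of_le h with h | h
      · exact Or.inl h.symm
      · exact Or.inr h
    · rintro (rfl | h)
      · exact le_refl _
      · exact h.le
  rw [hins, Finset.prod_insert (by simp)]
  rw [mul_div_mul_comm, ← Finset.prod_div_distrib]
  have hfac : ∀ j ∈ univ.filter (fun j : Fin (n + 1) => m < j),
      -(q⁻¹ * ((∏ l ∈ univ.filter (fun l => l < j), (z (σ l))⁻¹) * z (σ j) ^ (k : ℤ))) /
        -(q⁻¹ * (∏ l ∈ univ.filter (fun l => l ≤ j), (z (σ l))⁻¹)) =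
      z (σ j) ^ ((k : ℤ) + 1) := by
    intro j _
    have hsplit : univ.filter (fun l : Fin (n + 1) => l ≤ j) =
        insert j (univ.filter (fun l => l < j)) := by
      ext l
      simp only [Finset.mem_filter, Finset.mem_insert, Finset.mem_univ, true_and]
      constructor
      · intro h
        rcases eq_or_lt_of_le h with h | h
        · exact Or.inl h
        · exact Or.inr h
      · rintro (rfl | h)
        · exact le_refl _
        · exact h.le
    rw [hsplit, Finset.prod_insert (by simp)]
    exact thetaDivHelper _ _ _ (hz (σ j)) (hPne j) hq0 _
  rw [Finset.prod_congr rfl hfac]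
  -- final scalar computation
  have hsplitm : univ.filter (fun l : Fin (n + 1) => l ≤ m) =
      insert m (univ.filter (fun l => l < m)) := by
    ext l
    simp only [Finset.mem_filter, Finset.mem_insert, Finset.mem_univ, true_and]
    constructor
    · intro h
      rcases eq_or_lt_of_le h with h | h
      · exact Or.inl h
      · exact Or.inr h
    · rintro (rfl | h)
      · exact le_refl _
      · exact h.le
  have hprodsplit : (∏ i ∈ Finset.univ.erase (0 : Fin (n + 1)), z i ^ ((k : ℤ) + 1)) =
      (∏ l ∈ univ.filter (fun l => l < m), (z (σ l))⁻¹) ^ (-((k : ℤ) + 1)) *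
      ∏ j ∈ univ.filter (fun j => m < j), z (σ j) ^ ((k : ℤ) + 1) := by
    have h1 : (∏ l ∈ univ.filter (fun l => l < m), (z (σ l))⁻¹) ^ (-((k : ℤ) + 1)) =
        ∏ l ∈ univ.filter (fun l : Fin (n + 1) => l < m), z (σ l) ^ ((k : ℤ) + 1) := by
      rw [← Finset.prod_zpow]
      apply Finset.prod_congr rfl
      intro l _
      rw [inv_zpow, ← zpow_neg, neg_neg]
    rw [h1, ← Finset.prod_union]
    · have h2 : univ.filter (fun l : Fin (n + 1) => l < m) ∪ univ.filter (fun j => m < j) =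
          univ.erase m := by
        ext j
        simp only [Finset.mem_union, Finset.mem_filter, Finset.mem_univ, true_and,
          Finset.mem_erase, and_true]
        constructor
        · rintro (h | h)
          · exact ne_of_lt h
          · exact ne_of_gt h
        · intro h
          exact h.lt_or_gt
      rw [h2]
      symm
      apply Finset.prod_bij (fun (j : Fin (n + 1)) (_ : j ∈ univ.erase m) => σ j)
      · intro a ha
        simp only [Finset.mem_erase, Finset.mem_univ, and_true] at ha ⊢
        exact hne a ha
      · intro a _ b _ h
        exact σ.injective h
      · intro b hb
        refine ⟨σ.symm b, ?_, σ.apply_symm_apply b⟩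
        simp only [Finset.mem_erase, Finset.mem_univ, and_true] at hb ⊢
        intro h
        apply hb
        rw [← hσm, ← h, σ.apply_symm_apply b]
      · intro a _
        rfl
    · rw [Finset.disjoint_left]
      intro a ha hb
      simp only [Finset.mem_filter, Finset.mem_univ, true_and] at ha hb
      exact absurd (ha.trans hb) (lt_irrefl a)
  rw [hCdef, hprodsplit, hsplitm, Finset.prod_insert (by simp), hσm]
  -- now pure scalar algebra with exponent splits
  have hE : (-(((k : ℤ) + 1) * ((k : ℤ) - 2) / 2)) = 1 + (-((k : ℤ) * ((k : ℤ) - 1) / 2)) := by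
    have h2 : ((k : ℤ) + 1) * ((k : ℤ) - 2) = (k : ℤ) * ((k : ℤ) - 1) + (-1) * 2 := by ring
    rw [h2, Int.add_mul_ediv_right _ _ (by norm_num : (2 : ℤ) ≠ 0)]
    ring
  have hs : (-1 : ℂ) ^ k = -(-1 : ℂ) ^ (k - 1) := by
    conv_lhs => rw [show k = (k - 1) + 1 from (Nat.succ_pred_eq_of_pos hk).symm]
    rw [pow_succ]
    ring
  have hAexp : ((∏ l ∈ univ.filter (fun l => l < m), (z (σ l))⁻¹) * z 0 ^ (k : ℤ)) ^ (-(k : ℤ)) =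
      (∏ l ∈ univ.filter (fun l => l < m), (z (σ l))⁻¹) ^ (-(k : ℤ)) *
        z 0 ^ (-(k : ℤ) ^ 2) := by
    rw [mul_zpow, ← zpow_mul]
    congr 1
    ring_nf
  rw [hAdef, hσm, hAexp, hE, zpow_add₀ hq0, zpow_one,
    show (-(k : ℤ) ^ 2 + 1) = (-(k : ℤ) ^ 2) + 1 by ring, zpow_add₀ (hz 0), zpow_one,
    show (-((k : ℤ) + 1)) = (-(k : ℤ)) + (-1) by ring,
    zpow_add₀ (hPne m), zpow_neg_one, hs]
  field_simp
end

section
/- The functions f_{n,k} satisfy the recurrence f_{n+1,k}(z₁,...,z_{n+1}) = -∑_{i=1}^{n+1} [g(z₁^{-1}⋯z_i^k⋯z_{n+1}^{-1}) / g(z₁^{-1}⋯z_{n+1}^{-1})] · f_{n,k}(z₁,...,ẑᵢ,...,z_{n+1}), where in the numerator the i-th factor z_i^{-1} is replaced by z_i^k and ẑᵢ means z_i is omitted. -/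
open Finset

lemma prod_filter_lt_castSucc {M : Type*} [CommMonoid M] {n : ℕ} (f : Fin (n+1) → M) (j : Fin n) :
    ∏ l ∈ univ.filter (fun l => l < Fin.castSucc j), f l
      = ∏ l ∈ univ.filter (fun l => l < j), f (Fin.castSucc l) := by
  refine Finset.prod_bij' (fun l hl => l.castPred ?_) (fun l _ => Fin.castSucc l) ?_ ?_ ?_ ?_ ?_
  · have hlj : l < Fin.castSucc j := by simpa using hl
    exact Fin.ne_last_of_lt hlj
  · intro a ha
    simp only [mem_filter, mem_univ, true_and] at ha ⊢
    rw [← Fin.castSucc_lt_castSucc_iff, Fin.castSucc_castPred]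
    exact ha
  · intro a ha
    simp only [mem_filter, mem_univ, true_and] at ha ⊢
    rw [Fin.castSucc_lt_castSucc_iff]
    exact ha
  · intro a ha; simp
  · intro a ha; simp
  · intro a ha; rw [Fin.castSucc_castPred]

lemma prod_filter_le_castSucc {M : Type*} [CommMonoid M] {n : ℕ} (f : Fin (n+1) → M) (j : Fin n) :
    ∏ l ∈ univ.filter (fun l => l ≤ Fin.castSucc j), f l
      = ∏ l ∈ univ.filter (fun l => l ≤ j), f (Fin.castSucc l) := by
  refine Finset.prod_bij' (fun l hl => l.castPred ?_) (fun l _ => Fin.castSucc l) ?_ ?_ ?_ ?_ ?_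
  · have hlj : l ≤ Fin.castSucc j := by simpa using hl
    exact Fin.ne_last_of_lt (lt_of_le_of_lt hlj (Fin.castSucc_lt_last j))
  · intro a ha
    simp only [mem_filter, mem_univ, true_and] at ha ⊢
    rw [← Fin.castSucc_le_castSucc_iff, Fin.castSucc_castPred]
    exact ha
  · intro a ha
    simp only [mem_filter, mem_univ, true_and] at ha ⊢
    rw [Fin.castSucc_le_castSucc_iff]
    exact ha
  · intro a ha; simp
  · intro a ha; simp
  · intro a ha; rw [Fin.castSucc_castPred]

lemma prod_filter_lt_last {M : Type*} [CommMonoid M] {n : ℕ} (f : Fin (n+1) → M) :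
    ∏ l ∈ univ.filter (fun l => l < Fin.last n), f l = ∏ l : Fin n, f (Fin.castSucc l) := by
  refine Finset.prod_bij' (fun l hl => l.castPred ?_) (fun l _ => Fin.castSucc l) ?_ ?_ ?_ ?_ ?_
  · have hlj : l < Fin.last n := by simpa using hl
    exact Fin.ne_last_of_lt hlj
  · intro a ha; simp
  · intro a ha
    simp only [mem_filter, mem_univ, true_and]
    exact Fin.castSucc_lt_last a
  · intro a ha; simp
  · intro a ha; simp
  · intro a ha; rw [Fin.castSucc_castPred]

lemma prod_filter_le_last {M : Type*} [CommMonoid M] {n : ℕ} (f : Fin (n+1) → M) :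
    ∏ l ∈ univ.filter (fun l => l ≤ Fin.last n), f l = ∏ l, f l := by
  rw [Finset.filter_true_of_mem]
  intro a _; exact Fin.le_last a

theorem fnk_recurrence (q : ℂ) (hq0 : q ≠ 0) (hq : ‖q‖ < 1) (n k : ℕ) (hk : 1 ≤ k)
    (z : Fin (n + 1) → ℂ) (hz : ∀ i, z i ≠ 0)
    (hden : theta q (∏ l, (z l)⁻¹) ≠ 0)
    (hdenz : DenOK q (n + 1) z)
    (hdenz' : ∀ i : Fin (n + 1), DenOK q n (z ∘ i.succAbove)) :
    fnk q (n + 1) k z =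
      -∑ i : Fin (n + 1),
        (theta q ((∏ l ∈ Finset.univ.erase i, (z l)⁻¹) * z i ^ (k : ℤ)) /
            theta q (∏ l, (z l)⁻¹)) *
          fnk q n k (z ∘ i.succAbove) := by
  classical
  set E : Fin (n+1) × Equiv.Perm (Fin n) → Equiv.Perm (Fin (n+1)) :=
    fun p => finSuccEquivLast.trans (p.2.optionCongr.trans (finSuccEquiv' p.1).symm) with hE
  have hElast : ∀ p, E p (Fin.last n) = p.1 := by
    intro p
    simp [hE, finSuccEquivLast_last, finSuccEquiv'_symm_none]
  have hEcast : ∀ p (j : Fin n), E p (Fin.castSucc j) = p.1.succAbove (p.2 j) := by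
    intro p j
    have : (finSuccEquiv' p.1).symm (some (p.2 j)) = p.1.succAbove (p.2 j) := by
      rw [Equiv.symm_apply_eq, finSuccEquiv'_succAbove]
    simp [hE, finSuccEquivLast_castSucc, this]
  have hinj : Function.Injective E := by
    intro p p' h
    have h1 : p.1 = p'.1 := by
      have := congrArg (fun s : Equiv.Perm (Fin (n+1)) => s (Fin.last n)) h
      simpa [hElast] using this
    have h2 : p.2 = p'.2 := by
      ext j
      have := congrArg (fun s : Equiv.Perm (Fin (n+1)) => s (Fin.castSucc j)) h
      simp only [hEcast, h1] at this
      exact congrArg Fin.val (Fin.succAbove_right_injective this)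
    exact Prod.ext h1 h2
  have hbij : Function.Bijective E := by
    rw [Fintype.bijective_iff_injective_and_card]
    refine ⟨hinj, ?_⟩
    simp [Fintype.card_perm, Nat.factorial_succ]
  -- per-pair term computation
  have hterm : ∀ p : Fin (n+1) × Equiv.Perm (Fin n),
      (∏ j : Fin (n+1),
          theta q ((∏ l ∈ univ.filter (fun l => l < j), (z (E p l))⁻¹) * z (E p j) ^ (k : ℤ))) /
        (∏ j : Fin (n+1),
          theta q (∏ l ∈ univ.filter (fun l => l ≤ j), (z (E p l))⁻¹))
      = (theta q ((∏ l ∈ Finset.univ.erase p.1, (z l)⁻¹) * z p.1 ^ (k : ℤ)) /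
            theta q (∏ l, (z l)⁻¹)) *
          ((∏ j : Fin n,
              theta q ((∏ l ∈ univ.filter (fun l => l < j), ((z ∘ p.1.succAbove) (p.2 l))⁻¹) *
                (z ∘ p.1.succAbove) (p.2 j) ^ (k : ℤ))) /
            (∏ j : Fin n,
              theta q (∏ l ∈ univ.filter (fun l => l ≤ j), ((z ∘ p.1.succAbove) (p.2 l))⁻¹))) := by
    intro p
    obtain ⟨i, τ⟩ := p
    have herase : ∏ l ∈ Finset.univ.erase i, (z l)⁻¹ = ∏ l : Fin n, (z (i.succAbove l))⁻¹ := by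
      have h1 : (z i)⁻¹ * ∏ l ∈ Finset.univ.erase i, (z l)⁻¹
          = (z i)⁻¹ * ∏ l : Fin n, (z (i.succAbove l))⁻¹ := by
        rw [Finset.mul_prod_erase univ (fun l => (z l)⁻¹) (mem_univ i),
          ← Fin.prod_univ_succAbove (fun l => (z l)⁻¹) i]
      exact mul_left_cancel₀ (inv_ne_zero (hz i)) h1
    have hperm : ∏ l : Fin n, (z (i.succAbove (τ l)))⁻¹ = ∏ l : Fin n, (z (i.succAbove l))⁻¹ :=
      Equiv.prod_comp τ (fun l => (z (i.succAbove l))⁻¹)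
    have hpermz : ∏ l : Fin n, (z (i.succAbove (τ l)))⁻¹ = ∏ l ∈ Finset.univ.erase i, (z l)⁻¹ := by
      rw [hperm, herase]
    -- numerator
    have hnum : (∏ j : Fin (n+1),
        theta q ((∏ l ∈ univ.filter (fun l => l < j), (z (E (i,τ) l))⁻¹) * z (E (i,τ) j) ^ (k : ℤ)))
        = (∏ j : Fin n,
            theta q ((∏ l ∈ univ.filter (fun l => l < j), ((z ∘ i.succAbove) (τ l))⁻¹) *
              (z ∘ i.succAbove) (τ j) ^ (k : ℤ))) *
          theta q ((∏ l ∈ Finset.univ.erase i, (z l)⁻¹) * z i ^ (k : ℤ)) := by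
      rw [Fin.prod_univ_castSucc]
      congr 1
      · refine Finset.prod_congr rfl fun j _ => ?_
        rw [prod_filter_lt_castSucc (fun l => (z (E (i,τ) l))⁻¹) j]
        congr 2
        · refine Finset.prod_congr rfl fun l _ => ?_
          rw [hEcast]; rfl
        · rw [hEcast]; rfl
      · rw [prod_filter_lt_last (fun l => (z (E (i,τ) l))⁻¹), hElast]
        congr 2
        have h3 : ∀ l : Fin n, (z (E (i,τ) (Fin.castSucc l)))⁻¹ = (z (i.succAbove (τ l)))⁻¹ := by
          intro l; rw [hEcast]
        rw [Finset.prod_congr rfl (fun l _ => h3 l), hpermz]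
    -- denominator
    have hden2 : (∏ j : Fin (n+1),
        theta q (∏ l ∈ univ.filter (fun l => l ≤ j), (z (E (i,τ) l))⁻¹))
        = (∏ j : Fin n,
            theta q (∏ l ∈ univ.filter (fun l => l ≤ j), ((z ∘ i.succAbove) (τ l))⁻¹)) *
          theta q (∏ l, (z l)⁻¹) := by
      rw [Fin.prod_univ_castSucc]
      congr 1
      · refine Finset.prod_congr rfl fun j _ => ?_
        rw [prod_filter_le_castSucc (fun l => (z (E (i,τ) l))⁻¹) j]
        congr 1
        refine Finset.prod_congr rfl fun l _ => ?_
        rw [hEcast]; rfl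
      · rw [prod_filter_le_last (fun l => (z (E (i,τ) l))⁻¹)]
        congr 1
        exact Equiv.prod_comp (E (i,τ)) (fun l => (z l)⁻¹)
    rw [hnum, hden2, mul_div_mul_comm, mul_comm]
  -- main rewrite
  have hsum : (∑ σ : Equiv.Perm (Fin (n+1)),
      (∏ j : Fin (n+1),
          theta q ((∏ l ∈ univ.filter (fun l => l < j), (z (σ l))⁻¹) * z (σ j) ^ (k : ℤ))) /
        (∏ j : Fin (n+1),
          theta q (∏ l ∈ univ.filter (fun l => l ≤ j), (z (σ l))⁻¹)))
      = ∑ p : Fin (n+1) × Equiv.Perm (Fin n),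
        (theta q ((∏ l ∈ Finset.univ.erase p.1, (z l)⁻¹) * z p.1 ^ (k : ℤ)) /
              theta q (∏ l, (z l)⁻¹)) *
            ((∏ j : Fin n,
                theta q ((∏ l ∈ univ.filter (fun l => l < j), ((z ∘ p.1.succAbove) (p.2 l))⁻¹) *
                  (z ∘ p.1.succAbove) (p.2 j) ^ (k : ℤ))) /
              (∏ j : Fin n,
                theta q (∏ l ∈ univ.filter (fun l => l ≤ j), ((z ∘ p.1.succAbove) (p.2 l))⁻¹))) :=
    (Fintype.sum_bijective E hbij _ _ (fun p => (hterm p).symm)).symm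
  rw [fnk, hsum, Fintype.sum_prod_type]
  simp only [fnk]
  rw [pow_succ, mul_comm ((-1:ℂ)^n) (-1:ℂ), neg_one_mul, neg_mul, neg_inj]
  simp only [Finset.mul_sum]
  exact Finset.sum_congr rfl fun i _ => Finset.sum_congr rfl fun τ _ => by ring
end

section
/- In the limit q → 0, the function f_{n,k}(z₁,...,zₙ) specializes to ∑ z₁^{i₁}⋯zₙ^{iₙ}, the sum over all injections (i₁,...,iₙ) of {1,...,n} into {1,...,k} (i.e. tuples of pairwise distinct integers 1 ≤ i₁,...,iₙ ≤ k). In particular, for n = k it equals the functional realization ψ_k(x₁x₂⋯x_k) = ∑_{σ∈S_k} z_{σ(1)} z_{σ(2)}² ⋯ z_{σ(k)}^k. -/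
open Finset

lemma theta_zero (z : ℂ) : theta 0 z = 1 - z := by
  have h : ∀ i : ℤ, i ∉ ({0, 1} : Finset ℤ) →
      ((-1 : ℂ) ^ i * z ^ i * (0 : ℂ) ^ (i * (i - 1) / 2)) = 0 := by
    intro i hi
    simp only [Finset.mem_insert, Finset.mem_singleton] at hi
    push_neg at hi
    have h2 : 2 ≤ i * (i - 1) := by
      rcases lt_or_ge i 0 with h | h
      · nlinarith
      · have : 2 ≤ i := by omega
        nlinarith
    have : i * (i - 1) / 2 ≠ 0 := by omega
    rw [zero_zpow _ this, mul_zero]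
  rw [theta, tsum_eq_sum h]
  norm_num
  ring


/-- Sum over injective exponent functions with values in `s`. -/
noncomputable def EE (m : ℕ) (s : Finset ℕ) (z : Fin m → ℂ) : ℂ :=
  ∑ f ∈ (Fintype.piFinset fun _ : Fin m => s).filter Function.Injective,
    ∏ i, z i ^ f i

lemma sum_emb (m k : ℕ) (z : Fin m → ℂ) :
    ∑ ι : Fin m ↪ Fin k, ∏ i, z i ^ ((ι i : ℕ) + 1) = EE m (Finset.Icc 1 k) z := by
  rw [EE]
  refine Finset.sum_bij (fun ι _ => fun j => (ι j : ℕ) + 1) ?_ ?_ ?_ ?_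
  · intro ι _
    simp only [Finset.mem_filter, Fintype.mem_piFinset, Finset.mem_Icc]
    refine ⟨fun j => ⟨by omega, by have := (ι j).2; omega⟩, ?_⟩
    intro a b hab
    dsimp only at hab
    exact ι.injective (Fin.val_injective (by omega))
  · intro a _ b _ hab
    ext j
    have h := congrFun hab j
    omega
  · intro f hf
    simp only [Finset.mem_filter, Fintype.mem_piFinset, Finset.mem_Icc] at hf
    obtain ⟨hmem, hinj⟩ := hf
    refine ⟨⟨fun j => ⟨f j - 1, by have := hmem j; omega⟩, ?_⟩, Finset.mem_univ _, ?_⟩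
    · intro a b hab
      simp only [Fin.mk.injEq] at hab
      exact hinj (by have := hmem a; have := hmem b; omega)
    · funext j
      change f j - 1 + 1 = f j
      have := hmem j
      omega
  · intro ι _; rfl

lemma sum_filter_exists {m : ℕ} (s : Finset (Fin m → ℕ)) (hs : ∀ f ∈ s, Function.Injective f)
    (v : ℕ) (g : (Fin m → ℕ) → ℂ) :
    ∑ f ∈ s.filter (fun f => ∃ j, f j = v), g f
      = ∑ i : Fin m, ∑ f ∈ s.filter (fun f => f i = v), g f := by
  simp only [Finset.sum_filter]
  rw [Finset.sum_comm]
  refine Finset.sum_congr rfl ?_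
  intro f hf
  by_cases h : ∃ j, f j = v
  · obtain ⟨j, hj⟩ := h
    rw [if_pos ⟨j, hj⟩, Finset.sum_eq_single_of_mem j (Finset.mem_univ j)
      (fun b _ hb => if_neg fun hbv => hb (hs f hf (hbv.trans hj.symm))), if_pos hj]
  · rw [if_neg h]
    push_neg at h
    exact (Finset.sum_eq_zero fun i _ => if_neg (h i)).symm

lemma inj_filter_ne (m : ℕ) (s : Finset ℕ) (v : ℕ) :
    ((Fintype.piFinset fun _ : Fin m => s).filter Function.Injective).filter
        (fun f => ∀ j, f j ≠ v)
      = (Fintype.piFinset fun _ : Fin m => s.erase v).filter Function.Injective := by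
  ext f
  simp only [Finset.mem_filter, Fintype.mem_piFinset, Finset.mem_erase]
  constructor
  · rintro ⟨⟨h1, h2⟩, h3⟩; exact ⟨fun a => ⟨h3 a, h1 a⟩, h2⟩
  · rintro ⟨h1, h2⟩; exact ⟨⟨fun a => (h1 a).2, h2⟩, fun a => (h1 a).1⟩

lemma EE_split (m : ℕ) (s : Finset ℕ) (v : ℕ) (z : Fin m → ℂ) :
    EE m s z = EE m (s.erase v) z
      + ∑ i : Fin m, ∑ f ∈ ((Fintype.piFinset fun _ : Fin m => s).filter
          Function.Injective).filter (fun f => f i = v), ∏ j, z j ^ f j := by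
  rw [EE, ← Finset.sum_filter_add_sum_filter_not _ (fun f => ∀ j, f j ≠ v)]
  congr 1
  · rw [inj_filter_ne, EE]
  · rw [← sum_filter_exists _ (fun f hf => (Finset.mem_filter.1 hf).2) v]
    congr 1
    refine Finset.filter_congr ?_
    intro f _
    push_neg
    rfl

lemma EE_fiber (n : ℕ) (s : Finset ℕ) (v : ℕ) (hv : v ∈ s) (z : Fin (n + 1) → ℂ)
    (i : Fin (n + 1)) :
    ∑ f ∈ ((Fintype.piFinset fun _ : Fin (n + 1) => s).filter
        Function.Injective).filter (fun f => f i = v), ∏ j, z j ^ f j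
      = z i ^ v * EE n (s.erase v) (fun m => z (i.succAbove m)) := by
  rw [EE, Finset.mul_sum]
  refine Finset.sum_nbij' (fun f => fun m => f (i.succAbove m))
    (fun g => Fin.insertNth i v g) ?_ ?_ ?_ ?_ ?_
  · intro f hf
    simp only [Finset.mem_filter, Fintype.mem_piFinset, Finset.mem_erase] at hf ⊢
    obtain ⟨⟨hmem, hinj⟩, hfi⟩ := hf
    refine ⟨fun m => ⟨?_, hmem _⟩, hinj.comp (Fin.succAbove_right_injective)⟩
    intro hval
    exact Fin.succAbove_ne i m (hinj (hval.trans hfi.symm))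
  · intro g hg
    simp only [Finset.mem_filter, Fintype.mem_piFinset, Finset.mem_erase] at hg ⊢
    obtain ⟨hmem, hinj⟩ := hg
    refine ⟨⟨?_, ?_⟩, ?_⟩
    · intro j
      rcases eq_or_ne j i with rfl | hj
      · rw [Fin.insertNth_apply_same]; exact hv
      · obtain ⟨m, rfl⟩ := Fin.exists_succAbove_eq hj
        rw [Fin.insertNth_apply_succAbove]
        exact (hmem m).2
    · intro a b hab
      by_cases ha : a = i <;> by_cases hb : b = i
      · rw [ha, hb]
      · exfalso
        obtain ⟨m, hm⟩ := Fin.exists_succAbove_eq hb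
        rw [ha, Fin.insertNth_apply_same, ← hm, Fin.insertNth_apply_succAbove] at hab
        exact (hmem m).1 hab.symm
      · exfalso
        obtain ⟨m, hm⟩ := Fin.exists_succAbove_eq ha
        rw [hb, Fin.insertNth_apply_same, ← hm, Fin.insertNth_apply_succAbove] at hab
        exact (hmem m).1 hab
      · obtain ⟨m, hm⟩ := Fin.exists_succAbove_eq ha
        obtain ⟨m', hm'⟩ := Fin.exists_succAbove_eq hb
        rw [← hm, ← hm', Fin.insertNth_apply_succAbove, Fin.insertNth_apply_succAbove] at hab
        rw [← hm, ← hm', hinj hab]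
    · simp
  · intro f hf
    simp only [Finset.mem_filter] at hf
    funext j
    rcases eq_or_ne j i with rfl | hj
    · rw [Fin.insertNth_apply_same, hf.2]
    · obtain ⟨m, rfl⟩ := Fin.exists_succAbove_eq hj
      rw [Fin.insertNth_apply_succAbove]
  · intro g _
    funext m
    rw [Fin.insertNth_apply_succAbove]
  · intro f hf
    simp only [Finset.mem_filter] at hf
    rw [Fin.prod_univ_succAbove (fun j => z j ^ f j) i, hf.2]

lemma EE_shift (m k : ℕ) (z : Fin m → ℂ) :
    EE m (Finset.Icc 2 (k + 1)) z = (∏ j, z j) * EE m (Finset.Icc 1 k) z := by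
  rw [EE, EE, Finset.mul_sum]
  refine Finset.sum_nbij' (fun f => fun j => f j - 1) (fun g => fun j => g j + 1) ?_ ?_ ?_ ?_ ?_
  · intro f hf
    simp only [Finset.mem_filter, Fintype.mem_piFinset, Finset.mem_Icc] at hf ⊢
    obtain ⟨hmem, hinj⟩ := hf
    refine ⟨fun j => by have := hmem j; omega, ?_⟩
    intro a b hab
    dsimp only at hab
    exact hinj (by have := hmem a; have := hmem b; omega)
  · intro g hg
    simp only [Finset.mem_filter, Fintype.mem_piFinset, Finset.mem_Icc] at hg ⊢
    obtain ⟨hmem, hinj⟩ := hg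
    refine ⟨fun j => by have := hmem j; omega, ?_⟩
    intro a b hab
    dsimp only at hab
    exact hinj (by omega)
  · intro f hf
    simp only [Finset.mem_filter, Fintype.mem_piFinset, Finset.mem_Icc] at hf
    funext j
    have := hf.1 j
    dsimp only
    omega
  · intro g _
    funext j
    dsimp only
    omega
  · intro f hf
    simp only [Finset.mem_filter, Fintype.mem_piFinset, Finset.mem_Icc] at hf
    rw [← Finset.prod_mul_distrib]
    refine Finset.prod_congr rfl fun j _ => ?_
    have h1 := hf.1 j
    dsimp only
    calc z j ^ f j = z j ^ (f j - 1 + 1) := by rw [Nat.sub_add_cancel (by omega)]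
    _ = z j * z j ^ (f j - 1) := by rw [pow_succ']

lemma key_identity (n k : ℕ) (z : Fin (n + 1) → ℂ) :
    (∏ l, z l - 1) * EE (n + 1) (Finset.Icc 1 k) z
      = ∑ i : Fin (n + 1), (z i ^ (k + 1) - ∏ l, z l)
          * EE n (Finset.Icc 1 k) (fun m => z (i.succAbove m)) := by
  have e1 : (Finset.Icc 1 (k + 1)).erase (k + 1) = Finset.Icc 1 k := by
    ext a; simp only [Finset.mem_erase, Finset.mem_Icc]; omega
  have e2 : (Finset.Icc 1 (k + 1)).erase 1 = Finset.Icc 2 (k + 1) := by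
    ext a; simp only [Finset.mem_erase, Finset.mem_Icc]; omega
  have h1 := EE_split (n + 1) (Finset.Icc 1 (k + 1)) (k + 1) z
  have h2 := EE_split (n + 1) (Finset.Icc 1 (k + 1)) 1 z
  rw [e1] at h1
  rw [e2, EE_shift (n + 1) k z] at h2
  have hv1 : (k + 1 : ℕ) ∈ Finset.Icc 1 (k + 1) := by simp
  have hv2 : (1 : ℕ) ∈ Finset.Icc 1 (k + 1) := by simp
  have h1' : EE (n + 1) (Finset.Icc 1 (k + 1)) z
      = EE (n + 1) (Finset.Icc 1 k) z
        + ∑ i : Fin (n + 1), z i ^ (k + 1)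
            * EE n (Finset.Icc 1 k) (fun m => z (i.succAbove m)) := by
    rw [h1]
    congr 1
    refine Finset.sum_congr rfl fun i _ => ?_
    rw [EE_fiber n _ _ hv1 z i, e1]
  have h2' : EE (n + 1) (Finset.Icc 1 (k + 1)) z
      = (∏ l, z l) * EE (n + 1) (Finset.Icc 1 k) z
        + ∑ i : Fin (n + 1), (∏ l, z l)
            * EE n (Finset.Icc 1 k) (fun m => z (i.succAbove m)) := by
    rw [h2]
    congr 1
    refine Finset.sum_congr rfl fun i _ => ?_
    rw [EE_fiber n _ _ hv2 z i, e2, EE_shift n k (fun m => z (i.succAbove m)),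
      pow_one, ← mul_assoc, ← Fin.prod_univ_succAbove z i]
  have hsub : ∑ i : Fin (n + 1), (z i ^ (k + 1) - ∏ l, z l)
        * EE n (Finset.Icc 1 k) (fun m => z (i.succAbove m))
      = (∑ i : Fin (n + 1), z i ^ (k + 1)
            * EE n (Finset.Icc 1 k) (fun m => z (i.succAbove m)))
        - ∑ i : Fin (n + 1), (∏ l, z l)
            * EE n (Finset.Icc 1 k) (fun m => z (i.succAbove m)) := by
    rw [← Finset.sum_sub_distrib]
    exact Finset.sum_congr rfl fun i _ => by ring
  rw [hsub]
  have := h1'.symm.trans h2'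
  linear_combination -this

section Perm

variable {n : ℕ}

lemma filt_lt (j' : Fin n) :
    (univ.filter (fun l => l < Fin.castSucc j') : Finset (Fin (n + 1)))
      = (univ.filter (fun l => l < j')).map ⟨Fin.castSucc, Fin.castSucc_injective n⟩ := by
  ext a
  simp only [Finset.mem_filter, Finset.mem_univ, true_and, Finset.mem_map,
    Function.Embedding.coeFn_mk]
  constructor
  · intro h
    have hv : a.1 < j'.1 := by simpa [Fin.lt_def] using h
    exact ⟨⟨a.1, by omega⟩, by simpa [Fin.lt_def] using hv, by ext; simp⟩
  · rintro ⟨b, hb, rfl⟩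
    exact (Fin.castSucc_lt_castSucc_iff).2 hb

lemma filt_le (j' : Fin n) :
    (univ.filter (fun l => l ≤ Fin.castSucc j') : Finset (Fin (n + 1)))
      = (univ.filter (fun l => l ≤ j')).map ⟨Fin.castSucc, Fin.castSucc_injective n⟩ := by
  ext a
  simp only [Finset.mem_filter, Finset.mem_univ, true_and, Finset.mem_map,
    Function.Embedding.coeFn_mk]
  constructor
  · intro h
    have hv : a.1 ≤ j'.1 := by simpa [Fin.le_def] using h
    have : a.1 < n := lt_of_le_of_lt hv j'.2
    exact ⟨⟨a.1, this⟩, by simpa [Fin.le_def] using hv, by ext; simp⟩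
  · rintro ⟨b, hb, rfl⟩
    exact (Fin.castSucc_le_castSucc_iff).2 hb

lemma filt_lt_last :
    (univ.filter (fun l => l < Fin.last n) : Finset (Fin (n + 1)))
      = univ.map ⟨Fin.castSucc, Fin.castSucc_injective n⟩ := by
  ext a
  simp only [Finset.mem_filter, Finset.mem_univ, true_and, Finset.mem_map,
    Function.Embedding.coeFn_mk]
  constructor
  · intro h
    have hv : a.1 < n := by simpa [Fin.lt_def] using h
    exact ⟨⟨a.1, hv⟩, by ext; simp⟩
  · rintro ⟨b, _, rfl⟩
    exact Fin.castSucc_lt_last b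

lemma filt_le_last :
    (univ.filter (fun l => l ≤ Fin.last n) : Finset (Fin (n + 1))) = univ :=
  Finset.filter_true_of_mem fun a _ => Fin.le_last a

end Perm

lemma fnk_succ (q : ℂ) (n k : ℕ) (z : Fin (n + 1) → ℂ) :
    fnk q (n + 1) k z = -∑ i : Fin (n + 1),
      (theta q ((∏ m : Fin n, (z (i.succAbove m))⁻¹) * z i ^ (k : ℤ)) /
        theta q (∏ l : Fin (n + 1), (z l)⁻¹)) * fnk q n k (fun m => z (i.succAbove m)) := by
  classical
  set φ : Fin (n + 1) × Equiv.Perm (Fin n) → Equiv.Perm (Fin (n + 1)) := fun p =>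
    (finSuccEquivLast.trans ((Equiv.optionCongr p.2).trans (finSuccEquiv' p.1).symm)) with hφ
  have hφcs : ∀ (i : Fin (n + 1)) (τ : Equiv.Perm (Fin n)) (m : Fin n),
      φ (i, τ) (Fin.castSucc m) = i.succAbove (τ m) := by
    intro i τ m
    simp [hφ, finSuccEquivLast_castSucc]
  have hφlast : ∀ (i : Fin (n + 1)) (τ : Equiv.Perm (Fin n)), φ (i, τ) (Fin.last n) = i := by
    intro i τ
    simp [hφ, finSuccEquivLast_last]
  have hφbij : Function.Bijective φ := by
    rw [Fintype.bijective_iff_injective_and_card]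
    constructor
    · rintro ⟨i, τ⟩ ⟨i', τ'⟩ h
      have hi : i = i' := by rw [← hφlast i τ, ← hφlast i' τ', h]
      subst hi
      have hτ : τ = τ' := by
        ext m
        have h2 := DFunLike.congr_fun h (Fin.castSucc m)
        rw [hφcs, hφcs] at h2
        have := Fin.succAbove_right_injective h2
        rw [this]
      rw [hτ]
    · simp [Fintype.card_prod, Fintype.card_perm, Fintype.card_fin, Nat.factorial_succ]
  have hNum : ∀ (i : Fin (n + 1)) (τ : Equiv.Perm (Fin n)),
      (∏ j : Fin (n + 1), theta q
          ((∏ l ∈ univ.filter (fun l => l < j), (z (φ (i, τ) l))⁻¹)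
            * z (φ (i, τ) j) ^ (k : ℤ)))
        = (∏ j : Fin n, theta q
            ((∏ l ∈ univ.filter (fun l => l < j), (z (i.succAbove (τ l)))⁻¹)
              * z (i.succAbove (τ j)) ^ (k : ℤ)))
          * theta q ((∏ m : Fin n, (z (i.succAbove m))⁻¹) * z i ^ (k : ℤ)) := by
    intro i τ
    rw [Fin.prod_univ_castSucc]
    congr 1
    · refine Finset.prod_congr rfl fun j' _ => ?_
      rw [filt_lt, Finset.prod_map]
      simp only [Function.Embedding.coeFn_mk, hφcs]
    · rw [filt_lt_last, Finset.prod_map, hφlast]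
      simp only [Function.Embedding.coeFn_mk, hφcs]
      congr 2
      exact Equiv.prod_comp τ (fun m => (z (i.succAbove m))⁻¹)
  have hDen : ∀ (i : Fin (n + 1)) (τ : Equiv.Perm (Fin n)),
      (∏ j : Fin (n + 1), theta q
          (∏ l ∈ univ.filter (fun l => l ≤ j), (z (φ (i, τ) l))⁻¹))
        = (∏ j : Fin n, theta q
            (∏ l ∈ univ.filter (fun l => l ≤ j), (z (i.succAbove (τ l)))⁻¹))
          * theta q (∏ l : Fin (n + 1), (z l)⁻¹) := by
    intro i τ
    rw [Fin.prod_univ_castSucc]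
    congr 1
    · refine Finset.prod_congr rfl fun j' _ => ?_
      rw [filt_le, Finset.prod_map]
      simp only [Function.Embedding.coeFn_mk, hφcs]
    · rw [filt_le_last]
      congr 1
      exact Equiv.prod_comp (φ (i, τ)) (fun l => (z l)⁻¹)
  rw [fnk]
  rw [← Fintype.sum_bijective φ hφbij _ _ (fun p => rfl), Fintype.sum_prod_type]
  have hstep : ∀ i : Fin (n + 1),
      (∑ τ : Equiv.Perm (Fin n),
        (∏ j : Fin (n + 1), theta q
          ((∏ l ∈ univ.filter (fun l => l < j), (z (φ (i, τ) l))⁻¹)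
            * z (φ (i, τ) j) ^ (k : ℤ))) /
        (∏ j : Fin (n + 1), theta q
          (∏ l ∈ univ.filter (fun l => l ≤ j), (z (φ (i, τ) l))⁻¹)))
      = ((-1 : ℂ) ^ n * fnk q n k (fun m => z (i.succAbove m)))
        * (theta q ((∏ m : Fin n, (z (i.succAbove m))⁻¹) * z i ^ (k : ℤ)) /
            theta q (∏ l : Fin (n + 1), (z l)⁻¹)) := by
    intro i
    have : ∀ τ : Equiv.Perm (Fin n),
        (∏ j : Fin (n + 1), theta q
          ((∏ l ∈ univ.filter (fun l => l < j), (z (φ (i, τ) l))⁻¹)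
            * z (φ (i, τ) j) ^ (k : ℤ))) /
        (∏ j : Fin (n + 1), theta q
          (∏ l ∈ univ.filter (fun l => l ≤ j), (z (φ (i, τ) l))⁻¹))
        = ((∏ j : Fin n, theta q
            ((∏ l ∈ univ.filter (fun l => l < j), (z (i.succAbove (τ l)))⁻¹)
              * z (i.succAbove (τ j)) ^ (k : ℤ))) /
          (∏ j : Fin n, theta q
            (∏ l ∈ univ.filter (fun l => l ≤ j), (z (i.succAbove (τ l)))⁻¹)))
          * (theta q ((∏ m : Fin n, (z (i.succAbove m))⁻¹) * z i ^ (k : ℤ)) /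
              theta q (∏ l : Fin (n + 1), (z l)⁻¹)) := by
      intro τ
      rw [hNum i τ, hDen i τ, mul_div_mul_comm]
    rw [Finset.sum_congr rfl fun τ _ => this τ, ← Finset.sum_mul]
    congr 1
    rw [fnk, ← mul_assoc, ← mul_pow]
    norm_num
  rw [Finset.sum_congr rfl fun i _ => hstep i]
  have hpull : ∑ i : Fin (n + 1),
      ((-1 : ℂ) ^ n * fnk q n k (fun m => z (i.succAbove m)))
        * (theta q ((∏ m : Fin n, (z (i.succAbove m))⁻¹) * z i ^ (k : ℤ)) /
            theta q (∏ l : Fin (n + 1), (z l)⁻¹))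
      = (-1 : ℂ) ^ n * ∑ i : Fin (n + 1),
          (theta q ((∏ m : Fin n, (z (i.succAbove m))⁻¹) * z i ^ (k : ℤ)) /
            theta q (∏ l : Fin (n + 1), (z l)⁻¹)) * fnk q n k (fun m => z (i.succAbove m)) := by
    rw [Finset.mul_sum]
    exact Finset.sum_congr rfl fun i _ => by ring
  rw [hpull, ← mul_assoc, ← pow_add]
  have hodd : (-1 : ℂ) ^ (n + 1 + n) = -1 := Odd.neg_one_pow ⟨n, by ring⟩
  rw [hodd, neg_one_mul]

lemma fnk_zero (q : ℂ) (k : ℕ) (z : Fin 0 → ℂ) : fnk q 0 k z = 1 := by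
  rw [fnk]
  rw [Finset.sum_eq_single_of_mem (1 : Equiv.Perm (Fin 0)) (Finset.mem_univ _)
    (fun b _ hb => absurd (Subsingleton.elim b 1) hb)]
  simp

lemma EE_zero (s : Finset ℕ) (z : Fin 0 → ℂ) : EE 0 s z = 1 := by
  rw [EE]
  have h : (Fintype.piFinset fun _ : Fin 0 => s).filter Function.Injective
      = {fun i => i.elim0} := by
    ext f
    simp only [Finset.mem_filter, Fintype.mem_piFinset, Finset.mem_singleton]
    constructor
    · rintro ⟨-, -⟩
      funext i
      exact i.elim0
    · rintro rfl
      exact ⟨fun i => i.elim0, fun a => a.elim0⟩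
  rw [h, Finset.sum_singleton]
  simp

lemma denok_prod_ne {n : ℕ} {z : Fin n → ℂ} (h : DenOK 0 n z) (s : Finset (Fin n))
    (hs : s.Nonempty) : theta 0 (∏ l ∈ s, (z l)⁻¹) ≠ 0 := by
  classical
  have hc1 : 1 ≤ s.card := Finset.card_pos.2 hs
  have hcn : s.card ≤ n := by
    simpa using Finset.card_le_card (Finset.subset_univ s)
  set j : Fin n := ⟨s.card - 1, by omega⟩ with hj
  set t : Finset (Fin n) := univ.filter (fun l => l ≤ j) with htdef
  have htI : t = Finset.Iic j := by
    ext x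
    simp [htdef, Finset.mem_Iic]
  have htcard : t.card = s.card := by
    rw [htI, Fin.card_Iic]
    simp [hj]
    omega
  have h1 : Fintype.card {x // x ∈ t} = Fintype.card {x // x ∈ s} := by
    simpa [Fintype.card_coe] using htcard
  have h2 : Fintype.card {x // x ∉ t} = Fintype.card {x // x ∉ s} := by
    rw [Fintype.card_subtype_compl, Fintype.card_subtype_compl, h1]
  let e : {x // x ∈ t} ≃ {x // x ∈ s} := Fintype.equivOfCardEq h1
  let e' : {x // x ∉ t} ≃ {x // x ∉ s} := Fintype.equivOfCardEq h2
  let σ : Equiv.Perm (Fin n) :=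
    ((Equiv.sumCompl (· ∈ t)).symm.trans ((e.sumCongr e').trans (Equiv.sumCompl (· ∈ s))))
  have hmem : ∀ x ∈ t, σ x ∈ s := by
    intro x hx
    simp only [σ, Equiv.trans_apply]
    rw [Equiv.sumCompl_symm_apply_of_pos hx]
    simp
  have hmem' : ∀ x ∈ s, σ.symm x ∈ t := by
    intro x hx
    simp only [σ, Equiv.symm_trans_apply]
    rw [Equiv.symm_symm, Equiv.sumCompl_symm_apply_of_pos hx]
    simp
  have hprod : ∏ l ∈ t, (z (σ l))⁻¹ = ∏ x ∈ s, (z x)⁻¹ := by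
    refine Finset.prod_bij (fun l _ => σ l) hmem
      (fun a _ b _ hab => σ.injective hab) ?_ (fun a _ => rfl)
    intro x hx
    exact ⟨σ.symm x, hmem' x hx, by simp⟩
  have := h σ j
  rw [htdef] at hprod
  rw [hprod] at this
  exact this

lemma denok_restrict {n : ℕ} {z : Fin (n + 1) → ℂ} (h : DenOK 0 (n + 1) z)
    (i : Fin (n + 1)) : DenOK 0 n (fun m => z (i.succAbove m)) := by
  intro τ j
  have hinj : Function.Injective (fun l => i.succAbove (τ l)) :=
    Fin.succAbove_right_injective.comp τ.injective
  have hprod : ∏ l ∈ univ.filter (fun l => l ≤ j), (z (i.succAbove (τ l)))⁻¹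
      = ∏ x ∈ (univ.filter (fun l => l ≤ j)).image (fun l => i.succAbove (τ l)), (z x)⁻¹ := by
    rw [Finset.prod_image]
    intro a _ b _ hab
    exact hinj hab
  rw [hprod]
  refine denok_prod_ne h _ ?_
  refine Finset.Nonempty.image ⟨j, ?_⟩ _
  simp

lemma fnk_eq_EE : ∀ (n k : ℕ) (z : Fin n → ℂ), (∀ i, z i ≠ 0) → DenOK 0 n z →
    fnk 0 n k z = EE n (Finset.Icc 1 k) z := by
  intro n
  induction n with
  | zero => intro k z _ _; rw [fnk_zero, EE_zero]
  | succ n ih =>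
    intro k z hz hden
    rw [fnk_succ]
    have hP : (∏ l : Fin (n + 1), z l) ≠ 0 := Finset.prod_ne_zero_iff.2 fun i _ => hz i
    have hPinv : (∏ l : Fin (n + 1), (z l)⁻¹) = (∏ l : Fin (n + 1), z l)⁻¹ :=
      Finset.prod_inv_distrib _
    have hB : theta 0 (∏ l : Fin (n + 1), (z l)⁻¹) ≠ 0 := by
      simpa using denok_prod_ne hden univ univ_nonempty
    have hB' : (1 : ℂ) - (∏ l : Fin (n + 1), z l)⁻¹ ≠ 0 := by
      rw [theta_zero, hPinv] at hB
      exact hB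
    have hP1 : (∏ l : Fin (n + 1), z l) - 1 ≠ 0 := by
      intro hcon
      apply hB'
      rw [sub_eq_zero.1 hcon]
      norm_num
    have hterm : ∀ i : Fin (n + 1),
        theta 0 ((∏ m : Fin n, (z (i.succAbove m))⁻¹) * z i ^ (k : ℤ)) /
            theta 0 (∏ l : Fin (n + 1), (z l)⁻¹) * fnk 0 n k (fun m => z (i.succAbove m))
          = -(((z i ^ (k + 1) - ∏ l : Fin (n + 1), z l)
              * EE n (Finset.Icc 1 k) (fun m => z (i.succAbove m)))
                / ((∏ l : Fin (n + 1), z l) - 1)) := by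
      intro i
      have hQ : (∏ m : Fin n, z (i.succAbove m)) ≠ 0 :=
        Finset.prod_ne_zero_iff.2 fun m _ => hz _
      have hPQ : (∏ l : Fin (n + 1), z l) = z i * ∏ m : Fin n, z (i.succAbove m) :=
        Fin.prod_univ_succAbove z i
      have hQinv : (∏ m : Fin n, (z (i.succAbove m))⁻¹)
          = (∏ m : Fin n, z (i.succAbove m))⁻¹ := Finset.prod_inv_distrib _
      rw [ih k _ (fun m => hz _) (denok_restrict hden i), theta_zero, theta_zero,
        hPinv, hQinv, zpow_natCast, hPQ]
      rw [hPQ] at hP1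
      have ha := hz i
      field_simp
      ring
    rw [Finset.sum_congr rfl fun i _ => hterm i]
    rw [Finset.sum_neg_distrib, neg_neg, ← Finset.sum_div, ← key_identity n k z,
      mul_div_cancel_left₀ _ hP1]

/-- At `q = 0` (where `g(z) = 1 - z`), `f_{n,k}` specializes to
`∑ z₁^{i₁} ⋯ zₙ^{iₙ}`, the sum over all injections of `{1,…,n}` into `{1,…,k}`;
for `n = k` this is `ψ_k(x₁⋯x_k) = ∑_{σ∈S_k} z_{σ(1)} z_{σ(2)}² ⋯ z_{σ(k)}^k`. -/
theorem fnk_at_q_zero (n k : ℕ) (hk : 1 ≤ k) (z : Fin n → ℂ) (hz : ∀ i, z i ≠ 0)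
    (hden : DenOK 0 n z) :
    fnk 0 n k z = ∑ ι : Fin n ↪ Fin k, ∏ i : Fin n, z i ^ ((ι i : ℕ) + 1) := by
  rw [fnk_eq_EE n k z hz hden, ← sum_emb]
end
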